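/- Let f : ℝ → ℝ be monotone increasing and differentiable with f(0) = 0, let L > 0, let t* = min{1/(2|f(L)|), 1/(2|f(−L)|)}, and fix t ∈ [0, t*). Suppose that for all x ∈ (0, L]: x·(∂_x ℒ₁(t f(x))/2 + t f′(0)) ≥ ℒ₁(t f(x)) and (ℒ₁(t f(x)) − ℒ₁(t f(−x)))/(2x) ≥ t f′(0). Define α_f(L,t) = ℒ₁(t f(L))/L² − t f′(0)/L and γ_f(t) = t f′(0). Then for any real numbers a, b such that ℒ₁(t f(x)) ≤ a·x² + b·x for all x ∈ [−L, L], it holds that α_f(L,t)·x² + γ_f(t)·x ≤ a·x² + b·x for all x ∈ [−L, L]. -/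

import Mathlib

open Real

/-- `ℒ₁(y) = -log(1 - 2y)/2`. -/
noncomputable def L1 (y : ℝ) : ℝ := -Real.log (1 - 2 * y) / 2

/-- **Lemma 1, `ℒ₁` part (upper bound)**: under the stated conditions, the parabola
with coefficients `α_f(L,t) = ℒ₁(t f(L))/L² − t f′(0)/L` and `γ_f(t) = t f′(0)`
is pointwise minimal among all parabolas `a x² + b x` dominating `ℒ₁(t f(x))` on `[-L, L]`.  Here `t < t* = min{1/(2|f(L)|), 1/(2|f(−L)|)}`
is expressed as `2 t |f(L)| < 1` and `2 t |f(−L)| < 1`. -/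
theorem L1_quadratic_bound_optimal
    (f : ℝ → ℝ) (hmono : Monotone f) (hdiff : Differentiable ℝ f) (hf0 : f 0 = 0)
    (L : ℝ) (hL : 0 < L) (t : ℝ) (ht0 : 0 ≤ t)
    (htL : 2 * t * |f L| < 1) (htmL : 2 * t * |f (-L)| < 1)
    (hcond1 : ∀ x ∈ Set.Ioc (0 : ℝ) L,
      x * (deriv (fun y => L1 (t * f y)) x / 2 + t * deriv f 0) ≥ L1 (t * f x))
    (hcond2 : ∀ x ∈ Set.Ioc (0 : ℝ) L,
      (L1 (t * f x) - L1 (t * f (-x))) / (2 * x) ≥ t * deriv f 0) :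
    ∀ a b : ℝ,
      (∀ x ∈ Set.Icc (-L) L, L1 (t * f x) ≤ a * x ^ 2 + b * x) →
      ∀ x ∈ Set.Icc (-L) L,
        (L1 (t * f L) / L ^ 2 - t * deriv f 0 / L) * x ^ 2 + (t * deriv f 0) * x ≤
          a * x ^ 2 + b * x := by
  intro a b hab
  -- derivative of the inner function at 0
  have hft : HasDerivAt (fun y => t * f y) (t * deriv f 0) 0 :=
    ((hdiff 0).hasDerivAt).const_mul t
  -- derivative of L1 at 0 is 1
  have h1 : HasDerivAt (fun y : ℝ => 1 - 2 * y) (-2) (0 : ℝ) := by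
    simpa using ((hasDerivAt_id (0:ℝ)).const_mul 2).const_sub 1
  have hne : (1 : ℝ) - 2 * 0 ≠ 0 := by norm_num
  have hlog : HasDerivAt (fun y : ℝ => Real.log (1 - 2 * y)) (-2 / (1 - 2 * 0)) 0 :=
    h1.log hne
  have hL1 : HasDerivAt L1 1 0 := by
    have := (hlog.neg).div_const 2
    have h2 : -(-2 / (1 - 2 * (0:ℝ))) / 2 = 1 := by norm_num
    rw [h2] at this
    exact this
  have hL10 : L1 (t * f 0) = 0 := by simp [L1, hf0]
  -- derivative of the composite at 0
  have hh : HasDerivAt (fun x => L1 (t * f x)) (t * deriv f 0) 0 := by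
    have hL1' : HasDerivAt L1 1 (t * f 0) := by rw [hf0, mul_zero]; exact hL1
    have := hL1'.comp 0 hft
    simp at this; exact this
  -- derivative of φ = a x² + b x − L1(t f x) at 0
  have hq : HasDerivAt (fun x : ℝ => a * x ^ 2 + b * x) b 0 := by
    have := ((hasDerivAt_pow 2 (0:ℝ)).const_mul a).add ((hasDerivAt_id (0:ℝ)).const_mul b)
    simp at this; exact this
  have hφ : HasDerivAt (fun x => a * x ^ 2 + b * x - L1 (t * f x))
      (b - t * deriv f 0) 0 := hq.sub hh
  -- 0 is a local minimum of φ
  have hmem : Set.Icc (-L) L ∈ nhds (0 : ℝ) := Icc_mem_nhds (by linarith) hL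
  have hmin : IsLocalMin (fun x => a * x ^ 2 + b * x - L1 (t * f x)) 0 := by
    have h0 : (fun x => a * x ^ 2 + b * x - L1 (t * f x)) 0 = 0 := by
      simp [hL10]
    refine Filter.eventually_of_mem hmem fun x hx => ?_
    rw [h0]
    have := hab x hx
    show (0:ℝ) ≤ a * x ^ 2 + b * x - L1 (t * f x)
    linarith
  have hb : b = t * deriv f 0 := by
    have := hmin.hasDerivAt_eq_zero hφ
    linarith
  subst hb
  -- a ≥ α from the point x = L
  have hLmem : L ∈ Set.Icc (-L) L := ⟨by linarith, le_refl L⟩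
  have haL : L1 (t * f L) ≤ a * L ^ 2 + t * deriv f 0 * L := hab L hLmem
  have hL2 : (0 : ℝ) < L ^ 2 := by positivity
  have hα : (L1 (t * f L) / L ^ 2 - t * deriv f 0 / L) * L ^ 2
      = L1 (t * f L) - t * deriv f 0 * L := by
    field_simp
  have ha : L1 (t * f L) / L ^ 2 - t * deriv f 0 / L ≤ a := by
    rw [← mul_le_mul_iff_of_pos_right hL2, hα]
    linarith
  intro x hx
  have hx2 : (0 : ℝ) ≤ x ^ 2 := sq_nonneg x
  have := mul_le_mul_of_nonneg_right ha hx2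
  linarith
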